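/- If X is a contraction (operator norm at most 1) in M_n, then its elliptical width satisfies δ₂(X) ≤ 1. -/

import Mathlib

open scoped Matrix ComplexOrder

noncomputable section

/-- The numerical range of a matrix. -/
def numRange {m : Type*} [Fintype m] (X : Matrix m m ℂ) : Set ℂ :=
  {z | ∃ v : m → ℂ, star v ⬝ᵥ v = 1 ∧ z = star v ⬝ᵥ X.mulVec v}

/-- The inradius of a subset of the plane: the radius of the largest disc it contains. -/
def inRad (S : Set ℂ) : ℝ := sSup {r : ℝ | ∃ c : ℂ, Metric.closedBall c r ⊆ S}

/-- The indiameter: the diameter of the largest disc contained in the set. -/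
def inDiam (S : Set ℂ) : ℝ := 2 * inRad S

/-- The numerical range of the compression of `X` to the subspace `S`. -/
def nrOn {m : Type*} [Fintype m] (X : Matrix m m ℂ) (S : Submodule ℂ (m → ℂ)) : Set ℂ :=
  {z | ∃ v ∈ S, star v ⬝ᵥ v = 1 ∧ z = star v ⬝ᵥ X.mulVec v}

/-- The elliptical width `δ₂(X)`: the supremum of the indiameters of the numerical
ranges of compressions of `X` to two-dimensional subspaces. -/
def ellWidth {m : Type*} [Fintype m] (X : Matrix m m ℂ) : ℝ :=
  sSup {d | ∃ S : Submodule ℂ (m → ℂ), Module.finrank ℂ S = 2 ∧ d = inDiam (nrOn X S)}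

/-- The operator (spectral) norm of a matrix. -/
def opNorm {m : Type*} [Fintype m] [DecidableEq m] (M : Matrix m m ℂ) : ℝ :=
  ‖Matrix.toEuclideanCLM (𝕜 := ℂ) M‖

/-- The Frobenius (Hilbert–Schmidt) norm of a matrix. -/
def frobNorm {m : Type*} [Fintype m] (M : Matrix m m ℂ) : ℝ :=
  Real.sqrt ((Matrix.trace (Mᴴ * M)).re)

/-- Eigenvalues of a Hermitian matrix in decreasing order (junk value `0` otherwise):
`eigDesc M k` is the `(k+1)`-th largest eigenvalue of `M`. -/
def eigDesc {m : ℕ} (M : Matrix (Fin m) (Fin m) ℂ) (k : Fin m) : ℝ :=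
  if h : M.IsHermitian then (h.eigenvalues ∘ Tuple.sort h.eigenvalues) k.rev else 0

/-- The absolute value `|X| = (XᴴX)^(1/2)` of a matrix. -/
def matAbs {m : Type*} [Fintype m] [DecidableEq m] (X : Matrix m m ℂ) : Matrix m m ℂ :=
  ((Matrix.posSemidef_conjTranspose_mul_self X).1.eigenvectorUnitary : Matrix m m ℂ) *
    Matrix.diagonal ((↑) ∘ Real.sqrt ∘ (Matrix.posSemidef_conjTranspose_mul_self X).1.eigenvalues) *
    (star (Matrix.posSemidef_conjTranspose_mul_self X).1.eigenvectorUnitary : Matrix m m ℂ)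

/-- The `2n × 2n` block matrix `[[A, X],[Xᴴ, B]]`, reindexed by `Fin (n+n)`. -/
def blockR {n : ℕ} (A X B : Matrix (Fin n) (Fin n) ℂ) :
    Matrix (Fin (n + n)) (Fin (n + n)) ℂ :=
  (Matrix.fromBlocks A X Xᴴ B).submatrix finSumFinEquiv.symm finSumFinEquiv.symm

/-- The operator norm distance from `X` to the scalar matrices. -/
def distScalar {m : Type*} [Fintype m] [DecidableEq m] (X : Matrix m m ℂ) : ℝ :=
  ⨅ a : ℂ, opNorm (X - a • 1)

/-- Apply a real function to a Hermitian matrix by the functional calculus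
(junk value `0` if the matrix is not Hermitian). -/
def hermApply {m : Type*} [Fintype m] [DecidableEq m] (f : ℝ → ℝ) (M : Matrix m m ℂ) :
    Matrix m m ℂ :=
  if h : M.IsHermitian then h.cfc f else 0

end
section Helpers
open scoped InnerProductSpace
open Matrix Complex

lemma myDot_self (m : Type*) [Fintype m] (w : m → ℂ) :
    star w ⬝ᵥ w = ((∑ i, Complex.normSq (w i) : ℝ) : ℂ) := by
  simp [dotProduct, Complex.normSq_eq_conj_mul_self]

lemma myNormalize {m : Type*} [Fintype m] (w : m → ℂ) (hw : w ≠ 0) :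
    ∃ t : ℂ, star (t • w) ⬝ᵥ (t • w) = 1 := by
  have h0 : 0 < ∑ i, Complex.normSq (w i) := by
    rcases Function.ne_iff.mp hw with ⟨i, hi⟩
    have h1 : 0 < Complex.normSq (w i) := by
      simpa [Complex.normSq_pos] using hi
    exact lt_of_lt_of_le h1 (Finset.single_le_sum
      (fun j _ => Complex.normSq_nonneg _) (Finset.mem_univ i))
  refine ⟨((Real.sqrt (∑ i, Complex.normSq (w i)))⁻¹ : ℝ), ?_⟩
  rw [star_smul, smul_dotProduct, dotProduct_smul, myDot_self]
  rw [smul_eq_mul, smul_eq_mul]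
  have : (starRingEnd ℂ) ((Real.sqrt (∑ i, Complex.normSq (w i)))⁻¹ : ℝ)
      = ((Real.sqrt (∑ i, Complex.normSq (w i)))⁻¹ : ℝ) := by
    simp [Complex.conj_ofReal]
  rw [RCLike.star_def, this]
  norm_cast
  rw [← mul_assoc, ← mul_inv, Real.mul_self_sqrt h0.le, inv_mul_cancel₀ h0.ne']

lemma myExpand {m : Type*} [Fintype m] (u v w1 w2 : m → ℂ) (a b c d : ℂ) :
    star (a • u + b • v) ⬝ᵥ (c • w1 + d • w2)
      = (starRingEnd ℂ) a * c * (star u ⬝ᵥ w1) + (starRingEnd ℂ) a * d * (star u ⬝ᵥ w2)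
        + (starRingEnd ℂ) b * c * (star v ⬝ᵥ w1)
        + (starRingEnd ℂ) b * d * (star v ⬝ᵥ w2) := by
  rw [star_add, star_smul, star_smul, add_dotProduct, smul_dotProduct, smul_dotProduct,
    dotProduct_add, dotProduct_add, dotProduct_smul, dotProduct_smul, dotProduct_smul,
    dotProduct_smul]
  simp [RCLike.star_def, smul_eq_mul]
  ring

lemma myCS {m : Type*} [Fintype m] [DecidableEq m] (X : Matrix m m ℂ) (hX : opNorm X ≤ 1)
    (a b : m → ℂ) (ha : star a ⬝ᵥ a = 1) (hb : star b ⬝ᵥ b = 1) :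
    ‖star a ⬝ᵥ X.mulVec b‖ ≤ 1 := by
  set a' : EuclideanSpace ℂ m := (WithLp.equiv 2 _).symm a with ha'
  set b' : EuclideanSpace ℂ m := (WithLp.equiv 2 _).symm b with hb'
  have hna : ‖a'‖ = 1 := by
    have h1 : (⟪a', a'⟫_ℂ) = 1 := by
      exact (dotProduct_comm _ _).trans ha
    have := inner_self_eq_norm_sq_to_K (𝕜 := ℂ) a'
    rw [h1] at this
    have h2 : (‖a'‖ : ℂ) ^ 2 = 1 := this.symm
    have h3 : ‖a'‖ ^ 2 = 1 := by exact_mod_cast h2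
    nlinarith [norm_nonneg a']
  have hnb : ‖b'‖ = 1 := by
    have h1 : (⟪b', b'⟫_ℂ) = 1 := by
      exact (dotProduct_comm _ _).trans hb
    have := inner_self_eq_norm_sq_to_K (𝕜 := ℂ) b'
    rw [h1] at this
    have h2 : (‖b'‖ : ℂ) ^ 2 = 1 := this.symm
    have h3 : ‖b'‖ ^ 2 = 1 := by exact_mod_cast h2
    nlinarith [norm_nonneg b']
  have key : star a ⬝ᵥ X.mulVec b = ⟪a', (Matrix.toEuclideanCLM (𝕜 := ℂ) X) b'⟫_ℂ := by
    exact dotProduct_comm _ _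
  rw [key]
  calc ‖(⟪a', (Matrix.toEuclideanCLM (𝕜 := ℂ) X) b'⟫_ℂ)‖
      = ‖(⟪a', (Matrix.toEuclideanCLM (𝕜 := ℂ) X) b'⟫_ℂ)‖ := rfl
    _ ≤ ‖a'‖ * ‖(Matrix.toEuclideanCLM (𝕜 := ℂ) X) b'‖ := norm_inner_le_norm _ _
    _ ≤ ‖a'‖ * (opNorm X * ‖b'‖) := by
        gcongr
        exact ContinuousLinearMap.le_opNorm _ _
    _ ≤ 1 := by rw [hna, hnb]; simpa using hX

lemma myOrtho {n : ℕ} (S : Submodule ℂ (Fin n → ℂ)) (hS : Module.finrank ℂ S = 2) :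
    ∃ p q : Fin n → ℂ, star p ⬝ᵥ p = 1 ∧ star q ⬝ᵥ q = 1 ∧ star p ⬝ᵥ q = 0 ∧
      ∀ w ∈ S, w ∈ Submodule.span ℂ ({p, q} : Set (Fin n → ℂ)) := by
  have b : Module.Basis (Fin 2) ℂ S := Module.finBasisOfFinrankEq ℂ S hS
  set e : Fin 2 → (Fin n → ℂ) := fun i => ((b i : S) : Fin n → ℂ) with he
  have li : LinearIndependent ℂ e := b.linearIndependent.map' S.subtype S.ker_subtype
  have he1 : e 0 ≠ 0 := by
    intro h
    exact (b.ne_zero 0) (by exact_mod_cast Subtype.coe_injective (h : (b 0 : Fin n → ℂ) = ((0 : S) : Fin n → ℂ)))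
  obtain ⟨t, hp⟩ := myNormalize (e 0) he1
  set p : Fin n → ℂ := t • e 0 with hpdef
  set c : ℂ := star p ⬝ᵥ e 1 with hcdef
  set q' : Fin n → ℂ := e 1 - c • p with hq'def
  have hq'0 : q' ≠ 0 := by
    intro h
    have h2 : e 1 = (c * t) • e 0 := by
      have : e 1 = c • p := by rwa [sub_eq_zero] at h
      rw [this, hpdef, smul_smul]
    have := Fintype.linearIndependent_iff.mp li ![c * t, -1] ?_ 1
    · simp at this
    · rw [Fin.sum_univ_two]
      simp only [Matrix.cons_val_zero, Matrix.cons_val_one, Matrix.head_cons]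
      rw [neg_smul, one_smul, ← h2, add_neg_cancel]
  obtain ⟨s, hq⟩ := myNormalize q' hq'0
  set q : Fin n → ℂ := s • q' with hqdef
  have hpq' : star p ⬝ᵥ q' = 0 := by
    rw [hq'def, dotProduct_sub, dotProduct_smul, ← hcdef, hp]
    simp
  have hpq : star p ⬝ᵥ q = 0 := by
    rw [hqdef, dotProduct_smul, hpq', smul_zero]
  have ht : t ≠ 0 := by
    intro h; rw [hpdef, h, zero_smul] at hp
    simp at hp
  have hs : s ≠ 0 := by
    intro h; rw [hqdef, h, zero_smul] at hq
    simp at hq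
  refine ⟨p, q, hp, hq, hpq, ?_⟩
  intro w hw
  have hrep := b.sum_repr ⟨w, hw⟩
  have hrep' : (b.repr ⟨w, hw⟩ 0) • e 0 + (b.repr ⟨w, hw⟩ 1) • e 1 = w := by
    have := congrArg (fun x : S => (x : Fin n → ℂ)) hrep
    simp only [Fin.sum_univ_two, Submodule.coe_add, Submodule.coe_smul] at this
    exact this
  have hmem1 : e 0 ∈ Submodule.span ℂ ({p, q} : Set (Fin n → ℂ)) := by
    have : e 0 = t⁻¹ • p := by rw [hpdef, smul_smul, inv_mul_cancel₀ ht, one_smul]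
    rw [this]
    exact Submodule.smul_mem _ _ (Submodule.subset_span (by simp))
  have hmem2 : e 1 ∈ Submodule.span ℂ ({p, q} : Set (Fin n → ℂ)) := by
    have hq' : q' = s⁻¹ • q := by rw [hqdef, smul_smul, inv_mul_cancel₀ hs, one_smul]
    have : e 1 = s⁻¹ • q + c • p := by rw [← hq', hq'def]; ring_nf
    rw [this]
    exact Submodule.add_mem _
      (Submodule.smul_mem _ _ (Submodule.subset_span (by simp)))
      (Submodule.smul_mem _ _ (Submodule.subset_span (by simp)))
  rw [← hrep']
  exact Submodule.add_mem _ (Submodule.smul_mem _ _ hmem1) (Submodule.smul_mem _ _ hmem2)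

lemma myStrip {n : ℕ} (X : Matrix (Fin n) (Fin n) ℂ) (hX : opNorm X ≤ 1)
    (S : Submodule ℂ (Fin n → ℂ)) (hS : Module.finrank ℂ S = 2) :
    ∃ ω : ℂ, ‖ω‖ = 1 ∧ ∃ m0 : ℝ, ∀ z ∈ nrOn X S, |(ω * z).re - m0| ≤ 1 / 2 := by
  obtain ⟨p, q, hpp, hqq, hpq, hspan⟩ := myOrtho S hS
  have hqp : star q ⬝ᵥ p = 0 := by
    rw [star_dotProduct, hpq, star_zero]
  -- compression matrix
  set M : Matrix (Fin 2) (Fin 2) ℂ := Matrix.of fun i j =>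
    star (![p, q] i) ⬝ᵥ X.mulVec (![p, q] j) with hMdef
  -- isometry identities
  have iso1 : ∀ x y : Fin 2 → ℂ,
      star (x 0 • p + x 1 • q) ⬝ᵥ (y 0 • p + y 1 • q) = star x ⬝ᵥ y := by
    intro x y
    rw [myExpand, hpp, hqq, hpq, hqp]
    simp only [dotProduct, Fin.sum_univ_two, Pi.star_apply, RCLike.star_def]
    ring
  have iso2 : ∀ x y : Fin 2 → ℂ,
      star (x 0 • p + x 1 • q) ⬝ᵥ X.mulVec (y 0 • p + y 1 • q) = star x ⬝ᵥ M.mulVec y := by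
    intro x y
    have hmv : X.mulVec (y 0 • p + y 1 • q) = y 0 • X.mulVec p + y 1 • X.mulVec q := by
      rw [Matrix.mulVec_add, Matrix.mulVec_smul, Matrix.mulVec_smul]
    rw [hmv, myExpand]
    simp only [dotProduct, Matrix.mulVec, hMdef, Fin.sum_univ_two, Matrix.of_apply,
      Matrix.cons_val_zero, Matrix.cons_val_one, Matrix.head_cons, Pi.star_apply,
      RCLike.star_def]
    ring
  -- eigenvector of M
  obtain ⟨μ, hμ⟩ := Module.End.exists_eigenvalue (Matrix.toLin' M)
  obtain ⟨g, hg⟩ := hμ.exists_hasEigenvector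
  have hg0 : g ≠ 0 := hg.right
  have hgeig : M.mulVec g = μ • g := by
    have := hg.apply_eq_smul
    rwa [Matrix.toLin'_apply] at this
  obtain ⟨u, hu1, hueig⟩ : ∃ u : Fin 2 → ℂ, star u ⬝ᵥ u = 1 ∧ M.mulVec u = μ • u := by
    obtain ⟨t, hu1⟩ := myNormalize g hg0
    exact ⟨t • g, hu1, by rw [Matrix.mulVec_smul, hgeig, smul_comm]⟩
  set v : Fin 2 → ℂ := ![-(starRingEnd ℂ) (u 1), (starRingEnd ℂ) (u 0)] with hvdef
  have huu' : (starRingEnd ℂ) (u 0) * u 0 + (starRingEnd ℂ) (u 1) * u 1 = 1 := by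
    have := hu1
    simpa [dotProduct, Fin.sum_univ_two] using this
  have hvv : star v ⬝ᵥ v = 1 := by
    simp [dotProduct, Fin.sum_univ_two, hvdef]
    linear_combination huu'
  have huv : star u ⬝ᵥ v = 0 := by
    simp [dotProduct, Fin.sum_univ_two, hvdef]
    ring
  have hvu : star v ⬝ᵥ u = 0 := by
    rw [star_dotProduct, huv, star_zero]
  have recon : ∀ x : Fin 2 → ℂ, x = (star u ⬝ᵥ x) • u + (star v ⬝ᵥ x) • v := by
    intro x
    funext i
    fin_cases i
    · simp only [dotProduct, Fin.sum_univ_two, Pi.add_apply, Pi.smul_apply,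
        smul_eq_mul, hvdef, Matrix.cons_val_zero, Matrix.cons_val_one, Matrix.head_cons,
        Fin.mk_zero, Fin.mk_one, Fin.isValue,
        Pi.star_apply, RCLike.star_def, map_neg, Complex.conj_conj]
      linear_combination (-(x 0)) * huu'
    · simp only [dotProduct, Fin.sum_univ_two, Pi.add_apply, Pi.smul_apply,
        smul_eq_mul, hvdef, Matrix.cons_val_zero, Matrix.cons_val_one, Matrix.head_cons,
        Fin.mk_zero, Fin.mk_one, Fin.isValue,
        Pi.star_apply, RCLike.star_def, map_neg, Complex.conj_conj]
      linear_combination (-(x 1)) * huu'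
  set τ : ℂ := star u ⬝ᵥ M.mulVec v with hτdef
  set σ : ℂ := star v ⬝ᵥ M.mulVec v with hσdef
  have hvMu : star v ⬝ᵥ M.mulVec u = 0 := by
    rw [hueig, dotProduct_smul, hvu, smul_zero]
  have huMu : star u ⬝ᵥ M.mulVec u = μ := by
    rw [hueig, dotProduct_smul, hu1, smul_eq_mul, mul_one]
  -- bound on τ
  have hτ : ‖τ‖ ≤ 1 := by
    have h1 : star (u 0 • p + u 1 • q) ⬝ᵥ (u 0 • p + u 1 • q) = 1 := by rw [iso1]; exact hu1
    have h2 : star (v 0 • p + v 1 • q) ⬝ᵥ (v 0 • p + v 1 • q) = 1 := by rw [iso1]; exact hvv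
    have h3 : τ = star (u 0 • p + u 1 • q) ⬝ᵥ X.mulVec (v 0 • p + v 1 • q) := by
      rw [iso2]
    rw [h3]
    exact myCS X hX _ _ h1 h2
  -- choice of ω
  obtain ⟨ω, hω1, hω2⟩ : ∃ ω : ℂ, ‖ω‖ = 1 ∧ (ω * (μ - σ)).re = 0 := by
    by_cases hd : μ - σ = 0
    · exact ⟨1, by simp, by simp [hd]⟩
    · refine ⟨Complex.I * ((starRingEnd ℂ) (μ - σ) / ‖μ - σ‖), ?_, ?_⟩
      · rw [norm_mul, Complex.norm_I, one_mul, norm_div, Complex.norm_conj,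
          Complex.norm_real, Real.norm_of_nonneg (norm_nonneg _),
          div_self (by simp only [ne_eq, norm_eq_zero]; exact hd)]
      · have : Complex.I * ((starRingEnd ℂ) (μ - σ) / ‖μ - σ‖) * (μ - σ)
            = Complex.I * ((Complex.normSq (μ - σ) : ℝ) / (‖μ - σ‖ : ℝ)) := by
          rw [mul_assoc]
          congr 1
          rw [div_mul_eq_mul_div, mul_comm ((starRingEnd ℂ) (μ - σ)) (μ - σ), Complex.mul_conj]
        rw [this]
        simp
  refine ⟨ω, hω1, (ω * σ).re, ?_⟩
  rintro z ⟨w, hwS, hw1, rfl⟩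
  obtain ⟨a, b, hab⟩ := Submodule.mem_span_pair.mp (hspan w hwS)
  set x : Fin 2 → ℂ := ![a, b] with hxdef
  have hxw : x 0 • p + x 1 • q = w := by simpa [hxdef] using hab
  have hx1 : star x ⬝ᵥ x = 1 := by rw [← iso1, hxw]; exact hw1
  have hz : star w ⬝ᵥ X.mulVec w = star x ⬝ᵥ M.mulVec x := by
    rw [← hxw, iso2]
  set α : ℂ := star u ⬝ᵥ x with hαdef
  set β : ℂ := star v ⬝ᵥ x with hβdef
  have hx : x = α • u + β • v := recon x
  have hαβ : (starRingEnd ℂ) α * α + (starRingEnd ℂ) β * β = 1 := by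
    have h5 : star (α • u + β • v) ⬝ᵥ (α • u + β • v)
        = (starRingEnd ℂ) α * α + (starRingEnd ℂ) β * β := by
      rw [myExpand, hu1, huv, hvu, hvv]
      ring
    rw [← h5, ← hx, hx1]
  have hzval : star x ⬝ᵥ M.mulVec x
      = (starRingEnd ℂ) α * α * μ + (starRingEnd ℂ) α * β * τ + (starRingEnd ℂ) β * β * σ := by
    have hmv : M.mulVec x = (α * μ) • u + β • M.mulVec v := by
      conv_lhs => rw [hx]
      rw [Matrix.mulVec_add, Matrix.mulVec_smul, Matrix.mulVec_smul, hueig, smul_smul]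
    calc star x ⬝ᵥ M.mulVec x
        = star (α • u + β • v) ⬝ᵥ ((α * μ) • u + β • M.mulVec v) := by rw [← hmv, ← hx]
      _ = _ := by
          rw [myExpand, hu1, ← hτdef, ← hσdef, hvu]
          ring
  -- real parts
  have hna : (starRingEnd ℂ) α * α = ((Complex.normSq α : ℝ) : ℂ) := by
    rw [mul_comm, Complex.mul_conj]
  have hnb : (starRingEnd ℂ) β * β = ((Complex.normSq β : ℝ) : ℂ) := by
    rw [mul_comm, Complex.mul_conj]
  have hsum : Complex.normSq α + Complex.normSq β = 1 := by
    have := hαβ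
    rw [hna, hnb] at this
    exact_mod_cast this
  have hkey : ω * (star w ⬝ᵥ X.mulVec w) - ω * σ
      = ((Complex.normSq α : ℝ) : ℂ) * (ω * (μ - σ)) + ω * ((starRingEnd ℂ) α * β * τ) := by
    rw [hz, hzval]
    rw [hna, hnb] at hαβ ⊢
    linear_combination (ω * σ) * hαβ
  have hre : (ω * (star w ⬝ᵥ X.mulVec w)).re - (ω * σ).re = (ω * ((starRingEnd ℂ) α * β * τ)).re := by
    have h6 := congrArg Complex.re hkey
    rw [Complex.sub_re, Complex.add_re, Complex.re_ofReal_mul, hω2, mul_zero, zero_add] at h6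
    exact h6
  rw [hre]
  have habs : ‖ω * ((starRingEnd ℂ) α * β * τ)‖
      = ‖α‖ * ‖β‖ * ‖τ‖ := by
    rw [norm_mul, norm_mul, norm_mul, hω1, Complex.norm_conj, one_mul]
  have hAB : ‖α‖ * ‖β‖ ≤ 1 / 2 := by
    have h1 : ‖α‖ ^ 2 = Complex.normSq α := Complex.sq_norm α
    have h2 : ‖β‖ ^ 2 = Complex.normSq β := Complex.sq_norm β
    nlinarith [norm_nonneg α, norm_nonneg β,
      sq_nonneg (‖α‖ - ‖β‖)]
  calc |(ω * ((starRingEnd ℂ) α * β * τ)).re|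
      ≤ ‖ω * ((starRingEnd ℂ) α * β * τ)‖ := Complex.abs_re_le_norm _
    _ = ‖α‖ * ‖β‖ * ‖τ‖ := habs
    _ ≤ 1 / 2 * 1 := by
        apply mul_le_mul hAB hτ (norm_nonneg _) (by norm_num)
    _ = 1 / 2 := by norm_num


theorem myStmt4 {n : ℕ} (X : Matrix (Fin n) (Fin n) ℂ) (hX : opNorm X ≤ 1) :
    ellWidth X ≤ 1 := by
  apply Real.sSup_le _ (by norm_num)
  rintro d ⟨S, hS, rfl⟩
  rw [inDiam]
  have hrad : inRad (nrOn X S) ≤ 1 / 2 := by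
    apply Real.sSup_le _ (by norm_num)
    rintro r ⟨c, hc⟩
    by_cases hr : r < 0
    · linarith
    push_neg at hr
    obtain ⟨ω, hω1, m0, hstrip⟩ := myStrip X hX S hS
    have hωω : ω * (starRingEnd ℂ) ω = 1 := by
      rw [Complex.mul_conj, Complex.normSq_eq_norm_sq, hω1]
      norm_num
    have hmem : ∀ s : ℝ, |s| ≤ r → c + s * (starRingEnd ℂ) ω ∈ nrOn X S := by
      intro s hs
      apply hc
      rw [Metric.mem_closedBall, Complex.dist_eq]
      have : c + ↑s * (starRingEnd ℂ) ω - c = ↑s * (starRingEnd ℂ) ω := by ring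
      rw [this, norm_mul, Complex.norm_real, Complex.norm_conj, hω1, mul_one]
      exact hs
    have hre : ∀ s : ℝ, (ω * (c + ↑s * (starRingEnd ℂ) ω)).re = (ω * c).re + s := by
      intro s
      have : ω * (c + ↑s * (starRingEnd ℂ) ω) = ω * c + (s : ℂ) := by
        have h1 : ω * (c + ↑s * (starRingEnd ℂ) ω) = ω * c + ↑s * (ω * (starRingEnd ℂ) ω) := by
          ring
        rw [h1, hωω, mul_one]
      rw [this, Complex.add_re, Complex.ofReal_re]
    have h1 := hstrip _ (hmem r (by simp [_root_.abs_of_nonneg hr]))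
    have h2 := hstrip _ (hmem (-r) (by simp [abs_neg, _root_.abs_of_nonneg hr]))
    rw [hre r] at h1
    rw [hre (-r)] at h2
    rw [abs_le] at h1 h2
    linarith [h1.2, h2.1]
  linarith

/-- If `X` is a contraction then its elliptical width satisfies `δ₂(X) ≤ 1`. -/
theorem stmt4 {n : ℕ} (X : Matrix (Fin n) (Fin n) ℂ) (hX : opNorm X ≤ 1) :
    ellWidth X ≤ 1 := myStmt4 X hX

end Helpers
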